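/- Let K ≥ 1 and SF_p ≥ 1 be integers and let d[0],…,d[SF_p−1] ∈ {−1,+1} be a spreading sequence. Then the correlation coefficient satisfies the closed form ρ_DM(d) = (1 / (K · SF_p · sin(π/(2K)))) · | Σ_{l=0}^{SF_p−1} (−1)^l · exp( i·π·((K−1)/(2K))·d[l] ) |. -/

import Mathlib

open Real Complex Finset

/-- The `l`-th chip (sample index `n = 0,…,K-1`) of the DSSS-MSK matched filter for the
symbol spread by the binary sequence `d`:
`s^{(l)}[n] = exp(i (π/2) Σ_{i<l} d i) · exp(i π d l n / (2K))`.
The filter for symbol '1' uses `d`, the one for symbol '0' uses `-d`. -/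
noncomputable def dsssMskChip (d : ℕ → ℝ) (K l n : ℕ) : ℂ :=
  Complex.exp (Complex.I * (Real.pi / 2) * (∑ i ∈ Finset.range l, (d i : ℂ))) *
    Complex.exp (Complex.I * Real.pi * (d l : ℂ) * (n : ℂ) / (2 * (K : ℂ)))

lemma exp_pi_half' : Complex.exp (↑Real.pi / 2 * Complex.I) = Complex.I := by
  have h : (↑Real.pi / 2 : ℂ) = ((Real.pi/2 : ℝ) : ℂ) := by push_cast; ring
  rw [h, Complex.exp_mul_I, ← Complex.ofReal_cos, ← Complex.ofReal_sin,
    Real.cos_pi_div_two, Real.sin_pi_div_two]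
  simp

lemma myConjChip (d : ℕ → ℝ) (K l n : ℕ) :
    (starRingEnd ℂ) (dsssMskChip (fun i => -d i) K l n) = dsssMskChip d K l n := by
  unfold dsssMskChip
  simp only [map_mul, ← Complex.exp_conj, map_div₀, map_sum, Complex.conj_I,
    Complex.conj_ofReal, map_ofNat, map_natCast, Complex.ofReal_neg, map_neg,
    Finset.sum_neg_distrib]
  ring_nf

lemma myExpNegOne (e : ℝ) (he : e = 1 ∨ e = -1) :
    Complex.exp (Complex.I * ↑Real.pi * (e : ℂ)) = -1 := by
  rcases he with he | he <;> subst he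
  · rw [show Complex.I * ↑Real.pi * ((1:ℝ):ℂ) = ↑Real.pi * Complex.I by push_cast; ring,
      Complex.exp_pi_mul_I]
  · rw [show Complex.I * ↑Real.pi * ((-1:ℝ):ℂ) = -(↑Real.pi * Complex.I) by push_cast; ring,
      Complex.exp_neg, Complex.exp_pi_mul_I]
    norm_num

lemma mySign (d : ℕ → ℝ) (l : ℕ) (hl : ∀ i < l, d i = 1 ∨ d i = -1) :
    Complex.exp (Complex.I * (Real.pi / 2) * (∑ i ∈ Finset.range l, (d i : ℂ))) ^ 2
      = (-1 : ℂ) ^ l := by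
  rw [sq, ← Complex.exp_add]
  have h : Complex.I * (↑Real.pi / 2) * (∑ i ∈ Finset.range l, (d i : ℂ)) +
      Complex.I * (↑Real.pi / 2) * (∑ i ∈ Finset.range l, (d i : ℂ)) =
      ∑ i ∈ Finset.range l, Complex.I * ↑Real.pi * (d i : ℂ) := by
    rw [← Finset.mul_sum]; ring
  rw [h, Complex.exp_sum]
  rw [Finset.prod_congr rfl (fun i hi => myExpNegOne (d i) (hl i (Finset.mem_range.mp hi)))]
  simp

lemma myInnerSum (K : ℕ) (hK : 1 ≤ K) (e : ℝ) (he : e = 1 ∨ e = -1) :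
    ∑ n ∈ Finset.range K, Complex.exp (Complex.I * Real.pi * (e:ℂ) * (n:ℂ) / (2*(K:ℂ))) ^ 2
    = ((Real.sin (Real.pi / (2*K)) : ℝ) : ℂ)⁻¹ *
      Complex.exp (Complex.I * Real.pi * (((K:ℂ)-1)/(2*(K:ℂ))) * (e:ℂ)) := by
  have hK0 : (K:ℂ) ≠ 0 := Nat.cast_ne_zero.mpr (by omega)
  have hKR : (0:ℝ) < K := by exact_mod_cast hK
  have hKR1 : (1:ℝ) ≤ K := by exact_mod_cast hK
  set t : ℝ := Real.pi / (2*K) with ht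
  have htpos : 0 < t := by positivity
  have htlt : t < Real.pi := by
    rw [ht, div_lt_iff₀ (by positivity)]
    nlinarith [Real.pi_pos, hKR1]
  have hsinpos : 0 < Real.sin t := Real.sin_pos_of_pos_of_lt_pi htpos htlt
  set u : ℂ := Complex.exp (↑t * Complex.I) with hu
  have hu0 : u ≠ 0 := Complex.exp_ne_zero _
  have huim : u.im = Real.sin t := by rw [hu]; exact Complex.exp_ofReal_mul_I_im t
  have hu21 : u ^ 2 ≠ 1 := by
    intro h
    have h' : (u - 1) * (u + 1) = 0 := by ring_nf; linear_combination h
    rcases mul_eq_zero.mp h' with h'' | h''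
    · have : u = 1 := by linear_combination h''
      rw [this] at huim; simp at huim; linarith
    · have : u = -1 := by linear_combination h''
      rw [this] at huim; simp at huim; linarith
  have htc : (t : ℂ) = ↑Real.pi / (2*(K:ℂ)) := by rw [ht]; push_cast; ring
  have hsin : ((Real.sin t : ℝ) : ℂ) = (u⁻¹ - u) * Complex.I / 2 := by
    rw [Complex.ofReal_sin, Complex.sin, hu, neg_mul, Complex.exp_neg]
  have hsinC0 : ((Real.sin t : ℝ) : ℂ) ≠ 0 := by exact_mod_cast ne_of_gt hsinpos
  set r : ℂ := Complex.exp (Complex.I * ↑Real.pi * (e:ℂ) / (K:ℂ)) with hr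
  have hterm : ∀ n : ℕ, Complex.exp (Complex.I * Real.pi * (e:ℂ) * (n:ℂ) / (2*(K:ℂ))) ^ 2 = r ^ n := by
    intro n
    rw [sq, ← Complex.exp_add, hr, ← Complex.exp_nat_mul]
    congr 1
    field_simp
    ring
  rw [Finset.sum_congr rfl (fun n _ => hterm n)]
  rcases he with he | he <;> subst he
  · have hru : r = u ^ 2 := by
      rw [hr, hu, sq, ← Complex.exp_add]
      congr 1
      rw [htc]; push_cast; field_simp; ring
    have hr1 : r ≠ 1 := by rw [hru]; exact hu21
    have hrK : r ^ K = -1 := by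
      rw [hr, ← Complex.exp_nat_mul]
      have harg : (K:ℂ) * (Complex.I * ↑Real.pi * ((1:ℝ):ℂ) / (K:ℂ)) = ↑Real.pi * Complex.I := by
        push_cast; field_simp
      rw [harg, Complex.exp_pi_mul_I]
    rw [geom_sum_eq hr1, hrK]
    have hea : Complex.exp (Complex.I * ↑Real.pi * (((K:ℂ)-1)/(2*(K:ℂ))) * ((1:ℝ):ℂ))
        = Complex.I * u⁻¹ := by
      have harg : Complex.I * ↑Real.pi * (((K:ℂ)-1)/(2*(K:ℂ))) * ((1:ℝ):ℂ)
          = ↑Real.pi/2 * Complex.I + (-(↑t * Complex.I)) := by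
        rw [htc]; push_cast; field_simp; ring
      rw [harg, Complex.exp_add, exp_pi_half', Complex.exp_neg, ← hu]
    have h21 : u ^ 2 - 1 ≠ 0 := sub_ne_zero.mpr hu21
    have hw : ((u⁻¹ - u) * Complex.I / 2) ≠ 0 := by rw [← hsin]; exact hsinC0
    rw [hea, hsin, hru, inv_mul_eq_div, div_eq_div_iff h21 hw]
    field_simp
    ring
  · have hru : r = (u ^ 2)⁻¹ := by
      rw [hr, hu, sq, ← Complex.exp_add, ← Complex.exp_neg]
      congr 1
      rw [htc]; push_cast; field_simp; ring
    have hr1 : r ≠ 1 := by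
      rw [hru]; intro h
      exact hu21 (by field_simp at h; linear_combination -h)
    have hrK : r ^ K = -1 := by
      rw [hr, ← Complex.exp_nat_mul]
      have harg : (K:ℂ) * (Complex.I * ↑Real.pi * ((-1:ℝ):ℂ) / (K:ℂ)) = -(↑Real.pi * Complex.I) := by
        push_cast; field_simp
      rw [harg, Complex.exp_neg, Complex.exp_pi_mul_I]
      norm_num
    rw [geom_sum_eq hr1, hrK]
    have hea : Complex.exp (Complex.I * ↑Real.pi * (((K:ℂ)-1)/(2*(K:ℂ))) * ((-1:ℝ):ℂ))
        = -Complex.I * u := by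
      have harg : Complex.I * ↑Real.pi * (((K:ℂ)-1)/(2*(K:ℂ))) * ((-1:ℝ):ℂ)
          = -(↑Real.pi/2 * Complex.I) + (↑t * Complex.I) := by
        rw [htc]; push_cast; field_simp; ring
      rw [harg, Complex.exp_add, Complex.exp_neg, exp_pi_half', ← hu, Complex.inv_I]
    have hden : ((u ^ 2)⁻¹ - 1) ≠ 0 := sub_ne_zero.mpr (by rw [← hru]; exact hr1)
    have hw : ((u⁻¹ - u) * Complex.I / 2) ≠ 0 := by rw [← hsin]; exact hsinC0
    rw [hea, hsin, hru, inv_mul_eq_div, div_eq_div_iff hden hw]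
    field_simp
    ring

/-- Closed form for the DSSS-MSK correlation coefficient: for a spreading sequence `d`
with entries in `{-1,+1}`,
`ρ_DM(d) = 1/(K·SF_p·sin(π/(2K))) · |Σ_{l<SF_p} (-1)^l exp(i π ((K-1)/(2K)) d l)|`. -/
theorem dsssMsk_correlation_closed_form (K SFp : ℕ) (hK : 1 ≤ K) (hSFp : 1 ≤ SFp)
    (d : ℕ → ℝ) (hd : ∀ l < SFp, d l = 1 ∨ d l = -1) :
    (1 / ((K : ℝ) * (SFp : ℝ))) *
      ‖∑ l ∈ Finset.range SFp, ∑ n ∈ Finset.range K,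
        dsssMskChip d K l n * (starRingEnd ℂ) (dsssMskChip (fun i => -d i) K l n)‖ =
    (1 / ((K : ℝ) * (SFp : ℝ) * Real.sin (Real.pi / (2 * K)))) *
      ‖∑ l ∈ Finset.range SFp, (-1 : ℂ) ^ l *
        Complex.exp (Complex.I * Real.pi * ((((K : ℂ) - 1) / (2 * (K : ℂ)))) * (d l : ℂ))‖ := by
  have hKR : (0:ℝ) < K := by exact_mod_cast hK
  have hsinpos : 0 < Real.sin (Real.pi / (2*K)) := by
    apply Real.sin_pos_of_pos_of_lt_pi
    · positivity
    · have hKR1 : (1:ℝ) ≤ K := by exact_mod_cast hK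
      rw [div_lt_iff₀ (by positivity)]
      nlinarith [Real.pi_pos, hKR1]
  set c : ℂ := (((Real.sin (Real.pi / (2*K)) : ℝ)) : ℂ)⁻¹ with hc
  have hmain : ∀ l ∈ Finset.range SFp,
      (∑ n ∈ Finset.range K,
        dsssMskChip d K l n * (starRingEnd ℂ) (dsssMskChip (fun i => -d i) K l n)) =
      c * ((-1 : ℂ) ^ l *
        Complex.exp (Complex.I * Real.pi * ((((K : ℂ) - 1) / (2 * (K : ℂ)))) * (d l : ℂ))) := by
    intro l hl
    have hterm : ∀ n, dsssMskChip d K l n * (starRingEnd ℂ) (dsssMskChip (fun i => -d i) K l n)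
        = Complex.exp (Complex.I * (Real.pi / 2) * (∑ i ∈ Finset.range l, (d i : ℂ))) ^ 2 *
          Complex.exp (Complex.I * Real.pi * (d l : ℂ) * (n : ℂ) / (2*(K:ℂ))) ^ 2 := by
      intro n
      rw [myConjChip]
      unfold dsssMskChip
      ring
    rw [Finset.sum_congr rfl (fun n _ => hterm n), ← Finset.mul_sum,
      myInnerSum K hK (d l) (hd l (Finset.mem_range.mp hl)),
      mySign d l (fun i hi => hd i (lt_of_lt_of_le hi (le_of_lt (Finset.mem_range.mp hl))))]
    ring
  rw [Finset.sum_congr rfl hmain, ← Finset.mul_sum, norm_mul]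
  have habs : ‖c‖ = (Real.sin (Real.pi / (2*K)))⁻¹ := by
    rw [hc, norm_inv, Complex.norm_real, Real.norm_eq_abs, abs_of_pos hsinpos]
  rw [habs]
  have hx := ‖∑ l ∈ Finset.range SFp, (-1 : ℂ) ^ l *
        Complex.exp (Complex.I * Real.pi * ((((K : ℂ) - 1) / (2 * (K : ℂ)))) * (d l : ℂ))‖
  ring
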